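/- Let T be a finite set of transactions with pairwise distinct commit timestamps in which no anti-rw dependency occurs, i.e. every rw dependency t1 →rw t2 between members of T satisfies commit(t1) < commit(t2). Then the dependency relation dep restricted to T is contained in the strict commit order (dep(t1, t2) implies commit(t1) < commit(t2)); consequently dep has no cycle within T, and enumerating the transactions of T in increasing commit-timestamp order is a serialization respecting every dependency, so the schedule achieves Strong Serializability. -/

import Mathlib

/-- A timestamp is a pair `(m, p)` of naturals, ordered lexicographically. -/
abbrev Timestamp : Type := ℕ ×ₗ ℕ

/-- A transaction: a start timestamp of the form `(m, 0)`, a commit timestamp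
`(M, q)` with `q ≥ 1` and `start ≤ (M, 0)`, a finite read set of key/version
pairs with versions at most the start timestamp, and a finite write set of keys. -/
structure Txn (Key : Type) where
  startTS : Timestamp
  commitTS : Timestamp
  start_snd : (ofLex startTS).2 = 0
  commit_pos : 1 ≤ (ofLex commitTS).2
  start_le : startTS ≤ toLex ((ofLex commitTS).1, 0)
  reads : Finset (Key × Timestamp)
  writes : Finset Key
  reads_snapshot : ∀ kv ∈ reads, kv.2 ≤ startTS

/-- Concurrency of two transactions with respect to a commit-timestamp assignment `C`. -/
def ConcurrentWith {Key : Type} (C : Txn Key → Timestamp) (t1 t2 : Txn Key) : Prop :=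
  (C t1 < C t2 → t2.startTS < C t1) ∧ (C t2 < C t1 → t1.startTS < C t2)

/-- Concurrency with respect to the original commit timestamps. -/
def Concurrent {Key : Type} (t1 t2 : Txn Key) : Prop :=
  ConcurrentWith (fun t => t.commitTS) t1 t2

/-- Write-write dependency `t1 →ww t2` w.r.t. commit assignment `C`. -/
def wwC {Key : Type} (C : Txn Key → Timestamp) (t1 t2 : Txn Key) : Prop :=
  t1 ≠ t2 ∧ (∃ k, k ∈ t1.writes ∧ k ∈ t2.writes) ∧ C t1 < C t2

/-- Write-read dependency `t1 →wr t2` w.r.t. commit assignment `C`. -/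
def wrC {Key : Type} (C : Txn Key → Timestamp) (t1 t2 : Txn Key) : Prop :=
  t1 ≠ t2 ∧ ∃ kv ∈ t2.reads, kv.1 ∈ t1.writes ∧ kv.2 = C t1

/-- Read-write dependency `t1 →rw t2` w.r.t. commit assignment `C`. -/
def rwC {Key : Type} (C : Txn Key → Timestamp) (t1 t2 : Txn Key) : Prop :=
  t1 ≠ t2 ∧ ∃ kv ∈ t1.reads, kv.1 ∈ t2.writes ∧ kv.2 < C t2

/-- The dependency relation: union of ww, wr and rw. -/
def depC {Key : Type} (C : Txn Key → Timestamp) (t1 t2 : Txn Key) : Prop :=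
  wwC C t1 t2 ∨ wrC C t1 t2 ∨ rwC C t1 t2

/-- `t` is committed with respect to the next block number `M`. -/
def Committed {Key : Type} (M : ℕ) (t : Txn Key) : Prop :=
  (ofLex t.commitTS).1 < M

/-- `t` is pending with respect to the next block number `M`:
its commit timestamp is `(M, p)` (with `p ≥ 1` automatic). -/
def Pending {Key : Type} (M : ℕ) (t : Txn Key) : Prop :=
  (ofLex t.commitTS).1 = M

/-- A reordering of the transactions in `T`: it assigns to each pending
transaction a new commit timestamp `(M, p')` with `p' ≥ 1`, injectively on `T`,
leaving committed transactions' commit timestamps (and, implicitly, all start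
timestamps, read sets and write sets) unchanged. -/
structure Reordering {Key : Type} (M : ℕ) (T : Finset (Txn Key)) where
  newCommit : Txn Key → Timestamp
  fix_committed : ∀ t ∈ T, Committed M t → newCommit t = t.commitTS
  pending_block : ∀ t ∈ T, Pending M t → (ofLex (newCommit t)).1 = M
  pending_pos : ∀ t ∈ T, Pending M t → 1 ≤ (ofLex (newCommit t)).2
  inj : ∀ t ∈ T, ∀ u ∈ T, newCommit t = newCommit u → t = u

/-- if a finite set `T` of transactions with pairwise distinct
commit timestamps has no anti-rw dependency (every rw dependency between
members of `T` goes from an earlier to a later commit), then every dependency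
between members of `T` goes from an earlier to a later commit; consequently the
dependency relation has no cycle within `T`, and enumerating `T` in increasing
commit-timestamp order gives a serialization respecting every dependency,
i.e. the schedule achieves Strong Serializability. -/
theorem noAntiRW_strongSerializability {Key : Type} (T : Finset (Txn Key))
    (hdist : ∀ t1 ∈ T, ∀ t2 ∈ T, t1.commitTS = t2.commitTS → t1 = t2)
    (hnoanti : ∀ t1 ∈ T, ∀ t2 ∈ T,
      rwC (fun t => t.commitTS) t1 t2 → t1.commitTS < t2.commitTS) :
    (∀ t1 ∈ T, ∀ t2 ∈ T,
      depC (fun t => t.commitTS) t1 t2 → t1.commitTS < t2.commitTS) ∧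
    (∀ t ∈ T, ¬ Relation.TransGen
      (fun a b => a ∈ T ∧ b ∈ T ∧ depC (fun t => t.commitTS) a b) t t) ∧
    (∃ l : List (Txn Key),
      l.Nodup ∧ (∀ t, t ∈ l ↔ t ∈ T) ∧
      l.Pairwise (fun a b => a.commitTS < b.commitTS) ∧
      ∀ (i j : ℕ) (hi : i < l.length) (hj : j < l.length),
        depC (fun t => t.commitTS) (l.get ⟨i, hi⟩) (l.get ⟨j, hj⟩) → i < j) := by
  have hdep : ∀ t1 ∈ T, ∀ t2 ∈ T,
      depC (fun t => t.commitTS) t1 t2 → t1.commitTS < t2.commitTS := by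
    intro t1 h1 t2 h2 hd
    rcases hd with ⟨_, _, h⟩ | ⟨hne, kv, hkv, _, hv⟩ | hrw
    · exact h
    · -- wr: commit t1 = kv.2 ≤ start t2 ≤ (M2,0) < commit t2
      have h1' := t2.reads_snapshot kv hkv
      rw [hv] at h1'
      have h2' : t2.startTS ≤ toLex ((ofLex t2.commitTS).1, 0) := t2.start_le
      have h3' : toLex ((ofLex t2.commitTS).1, 0) < t2.commitTS := by
        have hp := t2.commit_pos
        rw [← toLex_ofLex t2.commitTS, Prod.Lex.lt_iff]
        exact Or.inr ⟨rfl, by simp only [ofLex_toLex]; omega⟩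
      exact lt_of_le_of_lt (le_trans h1' h2') h3'
    · exact hnoanti t1 h1 t2 h2 hrw
  refine ⟨hdep, ?_, ?_⟩
  · intro t ht hcyc
    have : ∀ u, Relation.TransGen
        (fun a b => a ∈ T ∧ b ∈ T ∧ depC (fun t => t.commitTS) a b) t u →
        t.commitTS < u.commitTS := by
      intro u hu
      induction hu with
      | single h => exact hdep _ h.1 _ h.2.1 h.2.2
      | tail _ h ih => exact lt_trans ih (hdep _ h.1 _ h.2.1 h.2.2)
    exact lt_irrefl _ (this t hcyc)
  · set le : Txn Key → Txn Key → Bool := fun a b => decide (a.commitTS ≤ b.commitTS) with hle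
    set l : List (Txn Key) := T.toList.mergeSort le with hl
    have hperm : l.Perm T.toList := List.mergeSort_perm _ _
    have hmem : ∀ t, t ∈ l ↔ t ∈ T := by
      intro t
      rw [hperm.mem_iff, Finset.mem_toList]
    have hnd : l.Nodup := hperm.nodup_iff.mpr T.nodup_toList
    have hsorted_le : l.Pairwise (fun a b => le a b = true) := by
      apply List.pairwise_mergeSort
      · intro a b c hab hbc
        simp only [hle, decide_eq_true_eq] at *
        exact le_trans hab hbc
      · intro a b
        simp only [hle, Bool.or_eq_true, decide_eq_true_eq]
        exact le_total a.commitTS b.commitTS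
    have hsorted : l.Pairwise (fun a b => a.commitTS < b.commitTS) := by
      have hne : l.Pairwise (· ≠ ·) := hnd
      refine List.Pairwise.imp_of_mem ?_ (hsorted_le.and hne)
      intro a b ha hb hab
      simp only [hle, decide_eq_true_eq] at hab
      refine lt_of_le_of_ne hab.1 ?_
      intro hcc
      exact hab.2 (hdist a ((hmem a).mp ha) b ((hmem b).mp hb) hcc)
    refine ⟨l, hnd, hmem, hsorted, ?_⟩
    intro i j hi hj hd
    have hlt : (l.get ⟨i, hi⟩).commitTS < (l.get ⟨j, hj⟩).commitTS :=
      hdep _ ((hmem _).mp (l.get_mem _)) _ ((hmem _).mp (l.get_mem _)) hd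
    by_contra hij
    push_neg at hij
    rcases lt_or_eq_of_le hij with h | h
    · exact absurd (lt_trans hlt (hsorted.rel_get_of_lt
        (show (⟨j, hj⟩ : Fin l.length) < ⟨i, hi⟩ from h))) (lt_irrefl _)
    · subst h
      exact lt_irrefl _ hlt
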